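/- If f ∈ C⁴[−1,1] with f⁽⁴⁾ ≥ 0 on [−1,1], then (1/2)[f(−√3/3) + f(√3/3)] + (1/2)[(1/3)f(−1) + (4/3)f(0) + (1/3)f(1)] − ∫₋₁¹ f(t) dt ≥ 0. -/

import Mathlib

open Set intervalIntegral

noncomputable def qpoly (a0 a1 a2 a3 a4 : ℝ) : ℝ → ℝ := fun t => a0 + a1*t + a2*t^2 + a3*t^3 + a4*t^4

lemma qpoly_hasDerivAt (a0 a1 a2 a3 a4 t : ℝ) :
    HasDerivAt (qpoly a0 a1 a2 a3 a4) (qpoly a1 (2*a2) (3*a3) (4*a4) 0 t) t := by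
  have h := ((((hasDerivAt_const t a0).add ((hasDerivAt_id t).const_mul a1)).add
    ((hasDerivAt_pow 2 t).const_mul a2)).add ((hasDerivAt_pow 3 t).const_mul a3)).add
    ((hasDerivAt_pow 4 t).const_mul a4)
  convert h using 1
  · rfl
  · rfl
  · rfl
  simp [qpoly]; ring

lemma qpoly_continuous (a0 a1 a2 a3 a4 : ℝ) : Continuous (qpoly a0 a1 a2 a3 a4) := by
  unfold qpoly; fun_prop

lemma ibp4 (f : ℝ → ℝ) (hf : ContDiffOn ℝ 4 f (Set.Icc (-1:ℝ) 1))
    (a b : ℝ) (hab : a ≤ b) (hsub : Set.Icc a b ⊆ Set.Icc (-1:ℝ) 1)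
    (a0 a1 a2 a3 a4 : ℝ) :
    (∫ t in a..b, qpoly a0 a1 a2 a3 a4 t * iteratedDerivWithin 4 f (Set.Icc (-1:ℝ) 1) t)
      = (qpoly a0 a1 a2 a3 a4 b * iteratedDerivWithin 3 f (Set.Icc (-1:ℝ) 1) b
          - qpoly a1 (2*a2) (3*a3) (4*a4) 0 b * iteratedDerivWithin 2 f (Set.Icc (-1:ℝ) 1) b
          + qpoly (2*a2) (6*a3) (12*a4) 0 0 b * iteratedDerivWithin 1 f (Set.Icc (-1:ℝ) 1) b
          - qpoly (6*a3) (24*a4) 0 0 0 b * f b)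
      - (qpoly a0 a1 a2 a3 a4 a * iteratedDerivWithin 3 f (Set.Icc (-1:ℝ) 1) a
          - qpoly a1 (2*a2) (3*a3) (4*a4) 0 a * iteratedDerivWithin 2 f (Set.Icc (-1:ℝ) 1) a
          + qpoly (2*a2) (6*a3) (12*a4) 0 0 a * iteratedDerivWithin 1 f (Set.Icc (-1:ℝ) 1) a
          - qpoly (6*a3) (24*a4) 0 0 0 a * f a)
      + (24*a4) * ∫ t in a..b, f t := by
  set S : Set ℝ := Set.Icc (-1:ℝ) 1 with hSdef
  have hS : UniqueDiffOn ℝ S := uniqueDiffOn_Icc (by norm_num)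
  have huIcc : Set.uIcc a b ⊆ S := by rw [Set.uIcc_of_le hab]; exact hsub
  -- within-derivatives of the iterated derivatives
  have hd : ∀ k : ℕ, k < 4 → ∀ x ∈ Set.uIcc a b,
      HasDerivWithinAt (iteratedDerivWithin k f S) (iteratedDerivWithin (k+1) f S x)
        (Set.uIcc a b) x := by
    intro k hk x hx
    have hx' : x ∈ S := huIcc hx
    have hdiff : DifferentiableWithinAt ℝ (iteratedDerivWithin k f S) S x :=
      hf.differentiableOn_iteratedDerivWithin (by exact_mod_cast hk) hS x hx'
    have h2 : HasDerivWithinAt (iteratedDerivWithin k f S) (iteratedDerivWithin (k+1) f S x) S x := by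
      rw [iteratedDerivWithin_succ]
      exact hdiff.hasDerivWithinAt
    exact h2.mono huIcc
  have hcont : ∀ k : ℕ, k ≤ 4 → ContinuousOn (iteratedDerivWithin k f S) S := fun k hk =>
    hf.continuousOn_iteratedDerivWithin (by exact_mod_cast hk) hS
  have hInt : ∀ k : ℕ, k ≤ 4 → IntervalIntegrable (iteratedDerivWithin k f S) MeasureTheory.volume a b :=
    fun k hk => ((hcont k hk).mono huIcc).intervalIntegrable
  have hqInt : ∀ b0 b1 b2 b3 b4 : ℝ,
      IntervalIntegrable (qpoly b0 b1 b2 b3 b4) MeasureTheory.volume a b :=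
    fun b0 b1 b2 b3 b4 => (qpoly_continuous b0 b1 b2 b3 b4).intervalIntegrable a b
  have hq : ∀ b0 b1 b2 b3 b4 : ℝ, ∀ x ∈ Set.uIcc a b,
      HasDerivWithinAt (qpoly b0 b1 b2 b3 b4) (qpoly b1 (2*b2) (3*b3) (4*b4) 0 x) (Set.uIcc a b) x :=
    fun b0 b1 b2 b3 b4 x _ => (qpoly_hasDerivAt b0 b1 b2 b3 b4 x).hasDerivWithinAt
  have hf0 : iteratedDerivWithin 0 f S = f := iteratedDerivWithin_zero
  have e1 := integral_mul_deriv_eq_deriv_mul_of_hasDerivWithinAt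
    (hq a0 a1 a2 a3 a4) (fun x hx => hd 3 (by norm_num) x hx)
    (hqInt a1 (2*a2) (3*a3) (4*a4) 0) (hInt 4 (by norm_num))
  have e2 := integral_mul_deriv_eq_deriv_mul_of_hasDerivWithinAt
    (hq a1 (2*a2) (3*a3) (4*a4) 0) (fun x hx => hd 2 (by norm_num) x hx)
    (hqInt (2*a2) (2*(3*a3)) (3*(4*a4)) (4*0) 0) (hInt 3 (by norm_num))
  have e3 := integral_mul_deriv_eq_deriv_mul_of_hasDerivWithinAt
    (hq (2*a2) (6*a3) (12*a4) 0 0) (fun x hx => hd 1 (by norm_num) x hx)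
    (hqInt (6*a3) (2*(12*a4)) (3*0) (4*0) 0) (hInt 2 (by norm_num))
  have e4 := integral_mul_deriv_eq_deriv_mul_of_hasDerivWithinAt
    (hq (6*a3) (24*a4) 0 0 0) (fun x hx => hd 0 (by norm_num) x hx)
    (hqInt (24*a4) (2*0) (3*0) (4*0) 0) (hInt 1 (by norm_num))
  rw [hf0] at e4
  have hcoef2 : qpoly (2*a2) (2*(3*a3)) (3*(4*a4)) (4*0) 0 = qpoly (2*a2) (6*a3) (12*a4) 0 0 := by
    funext x; simp only [qpoly]; ring
  have hcoef3 : qpoly (6*a3) (2*(12*a4)) (3*0) (4*0) 0 = qpoly (6*a3) (24*a4) 0 0 0 := by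
    funext x; simp only [qpoly]; ring
  have hcoef4 : qpoly (24*a4) (2*0) (3*0) (4*0) 0 = qpoly (24*a4) 0 0 0 0 := by
    funext x; simp only [qpoly]; ring
  rw [hcoef2] at e2
  rw [hcoef3] at e3
  rw [hcoef4] at e4
  have e5 : (∫ t in a..b, qpoly (24*a4) 0 0 0 0 t * f t) = (24*a4) * ∫ t in a..b, f t := by
    have : ∀ t : ℝ, qpoly (24*a4) 0 0 0 0 t * f t = (24*a4) * f t := fun t => by
      simp [qpoly]
    simp_rw [this]
    exact integral_const_mul _ _
  rw [e5] at e4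
  norm_num at e1 e2 e3 e4
  simp only [iteratedDerivWithin_one]
  linarith [e1, e2, e3, e4]

set_option maxHeartbeats 1000000 in
theorem gauss2_lobatto3_average_ge_integral (f : ℝ → ℝ)
    (hf : ContDiffOn ℝ 4 f (Set.Icc (-1:ℝ) 1))
    (h4 : ∀ x ∈ Set.Icc (-1:ℝ) 1, 0 ≤ iteratedDerivWithin 4 f (Set.Icc (-1:ℝ) 1) x) :
    0 ≤ (1 / 2) * (f (-(Real.sqrt 3) / 3) + f (Real.sqrt 3 / 3)) +
        (1 / 2) * ((1 / 3) * f (-1) + (4 / 3) * f 0 + (1 / 3) * f 1) -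
        ∫ t in (-1:ℝ)..1, f t := by
  have h3 : Real.sqrt 3 ^ 2 = 3 := Real.sq_sqrt (by norm_num)
  have h3n : (0:ℝ) ≤ Real.sqrt 3 := Real.sqrt_nonneg 3
  rw [show -(Real.sqrt 3) / 3 = -(Real.sqrt 3 / 3) by ring]
  obtain ⟨c, hcdef⟩ : ∃ x : ℝ, x = Real.sqrt 3 / 3 := ⟨_, rfl⟩
  rw [← hcdef]
  have hc2 : c^2 = 1/3 := by rw [hcdef, div_pow, h3]; norm_num
  have hlb : (0.577:ℝ) ≤ c := by rw [hcdef]; nlinarith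
  have hub : c ≤ 0.578 := by rw [hcdef]; nlinarith
  clear hcdef h3 h3n
  have o1 : (-1:ℝ) ≤ -c := by nlinarith
  have o2 : -c ≤ (0:ℝ) := by nlinarith
  have o3 : (0:ℝ) ≤ c := by nlinarith
  have o4 : c ≤ (1:ℝ) := by nlinarith
  have hsubD : Set.Icc (-1:ℝ) (-c) ⊆ Set.Icc (-1:ℝ) 1 := Set.Icc_subset_Icc le_rfl (by nlinarith)
  have hsubC : Set.Icc (-c) (0:ℝ) ⊆ Set.Icc (-1:ℝ) 1 := Set.Icc_subset_Icc (by nlinarith) (by norm_num)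
  have hsubB : Set.Icc (0:ℝ) c ⊆ Set.Icc (-1:ℝ) 1 := Set.Icc_subset_Icc (by norm_num) (by nlinarith)
  have hsubA : Set.Icc c (1:ℝ) ⊆ Set.Icc (-1:ℝ) 1 := Set.Icc_subset_Icc (by nlinarith) le_rfl
  have nnD : 0 ≤ ∫ t in (-1:ℝ)..(-c), qpoly (-1/12) (-1/2) (-1) (-5/6) (-1/4) t * iteratedDerivWithin 4 f (Set.Icc (-1:ℝ) 1) t := by
    apply intervalIntegral.integral_nonneg o1
    intro t ht
    apply mul_nonneg _ (h4 t (hsubD ht))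
    obtain ⟨ht1, ht2⟩ := ht
    have h1 : (0:ℝ) ≤ 1 + t := by linarith
    have h2 : (0:ℝ) ≤ -(3*t) - 1 := by nlinarith
    simp only [qpoly]
    nlinarith [mul_nonneg (mul_nonneg (mul_nonneg h1 h1) h1) h2]
  have nnA : 0 ≤ ∫ t in c..(1:ℝ), qpoly (-1/12) (1/2) (-1) (5/6) (-1/4) t * iteratedDerivWithin 4 f (Set.Icc (-1:ℝ) 1) t := by
    apply intervalIntegral.integral_nonneg o4
    intro t ht
    apply mul_nonneg _ (h4 t (hsubA ht))
    obtain ⟨ht1, ht2⟩ := ht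
    have h1 : (0:ℝ) ≤ 1 - t := by linarith
    have h2 : (0:ℝ) ≤ 3*t - 1 := by nlinarith
    simp only [qpoly]
    nlinarith [mul_nonneg (mul_nonneg (mul_nonneg h1 h1) h1) h2]
  have nnB : 0 ≤ ∫ t in (0:ℝ)..c, qpoly (c/6-1/12) 0 (3*c/2-1) (1/3) (-1/4) t * iteratedDerivWithin 4 f (Set.Icc (-1:ℝ) 1) t := by
    apply intervalIntegral.integral_nonneg o3
    intro t ht
    apply mul_nonneg _ (h4 t (hsubB ht))
    obtain ⟨ht1, ht2⟩ := ht
    simp only [qpoly]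
    nlinarith [mul_nonneg (sub_nonneg.2 ht2) ht1, mul_nonneg (mul_nonneg (sub_nonneg.2 ht2) ht1) ht1,
      mul_nonneg (mul_nonneg (sub_nonneg.2 ht2) (sub_nonneg.2 ht2)) ht1,
      mul_nonneg (mul_nonneg (mul_nonneg (sub_nonneg.2 ht2) (sub_nonneg.2 ht2)) (sub_nonneg.2 ht2)) ht1,
      sq_nonneg (c - t), sq_nonneg t, sq_nonneg (c + t), hc2, hlb, hub]
  have nnC : 0 ≤ ∫ t in (-c)..(0:ℝ), qpoly (c/6-1/12) 0 (3*c/2-1) (-1/3) (-1/4) t * iteratedDerivWithin 4 f (Set.Icc (-1:ℝ) 1) t := by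
    apply intervalIntegral.integral_nonneg o2
    intro t ht
    apply mul_nonneg _ (h4 t (hsubC ht))
    obtain ⟨ht1, ht2⟩ := ht
    simp only [qpoly]
    nlinarith [mul_nonneg (sub_nonneg.2 ht1) (neg_nonneg.2 ht2), sq_nonneg (c + t), sq_nonneg t,
      mul_nonneg (add_nonneg (by linarith : (0:ℝ) ≤ c + t) (by linarith : (0:ℝ) ≤ -t)) (by linarith : (0:ℝ) ≤ -t),
      mul_nonneg (mul_nonneg (by linarith : (0:ℝ) ≤ c + t) (by linarith : (0:ℝ) ≤ -t)) (by linarith : (0:ℝ) ≤ -t),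
      mul_nonneg (mul_nonneg (by linarith : (0:ℝ) ≤ c + t) (by linarith : (0:ℝ) ≤ c + t)) (by linarith : (0:ℝ) ≤ -t),
      mul_nonneg (mul_nonneg (mul_nonneg (by linarith : (0:ℝ) ≤ c + t) (by linarith : (0:ℝ) ≤ c + t)) (by linarith : (0:ℝ) ≤ c + t)) (by linarith : (0:ℝ) ≤ -t),
      hc2, hlb, hub]
  have eD := ibp4 f hf (-1) (-c) (by nlinarith) hsubD (-1/12) (-1/2) (-1) (-5/6) (-1/4)
  have eC := ibp4 f hf (-c) 0 (by nlinarith) hsubC (c/6-1/12) 0 (3*c/2-1) (-1/3) (-1/4)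
  have eB := ibp4 f hf 0 c (by nlinarith) hsubB (c/6-1/12) 0 (3*c/2-1) (1/3) (-1/4)
  have eA := ibp4 f hf c 1 (by nlinarith) hsubA (-1/12) (1/2) (-1) (5/6) (-1/4)
  have hfc : ContinuousOn f (Set.Icc (-1:ℝ) 1) := hf.continuousOn
  have hfi : ∀ u v : ℝ, u ∈ Set.Icc (-1:ℝ) 1 → v ∈ Set.Icc (-1:ℝ) 1 →
      IntervalIntegrable f MeasureTheory.volume u v := fun u v hu hv =>
    (hfc.mono (Set.uIcc_subset_Icc hu hv)).intervalIntegrable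
  have m1mem : (-1:ℝ) ∈ Set.Icc (-1:ℝ) 1 := Set.mem_Icc.2 (by norm_num)
  have mcmem : (-c) ∈ Set.Icc (-1:ℝ) 1 := Set.mem_Icc.2 (by constructor <;> nlinarith)
  have zmem : (0:ℝ) ∈ Set.Icc (-1:ℝ) 1 := Set.mem_Icc.2 (by norm_num)
  have pcmem : c ∈ Set.Icc (-1:ℝ) 1 := Set.mem_Icc.2 (by constructor <;> nlinarith)
  have p1mem : (1:ℝ) ∈ Set.Icc (-1:ℝ) 1 := Set.mem_Icc.2 (by norm_num)
  have hint : (∫ t in (-1:ℝ)..1, f t)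
      = (∫ t in (-1:ℝ)..(-c), f t) + (∫ t in (-c)..(0:ℝ), f t)
        + (∫ t in (0:ℝ)..c, f t) + (∫ t in c..(1:ℝ), f t) := by
    rw [integral_add_adjacent_intervals (hfi _ _ m1mem mcmem) (hfi _ _ mcmem zmem),
      integral_add_adjacent_intervals (hfi _ _ m1mem zmem) (hfi _ _ zmem pcmem),
      integral_add_adjacent_intervals (hfi _ _ m1mem pcmem) (hfi _ _ pcmem p1mem)]
  have key : (∫ t in (-1:ℝ)..(-c), qpoly (-1/12) (-1/2) (-1) (-5/6) (-1/4) t * iteratedDerivWithin 4 f (Set.Icc (-1:ℝ) 1) t)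
      + (∫ t in (-c)..(0:ℝ), qpoly (c/6-1/12) 0 (3*c/2-1) (-1/3) (-1/4) t * iteratedDerivWithin 4 f (Set.Icc (-1:ℝ) 1) t)
      + (∫ t in (0:ℝ)..c, qpoly (c/6-1/12) 0 (3*c/2-1) (1/3) (-1/4) t * iteratedDerivWithin 4 f (Set.Icc (-1:ℝ) 1) t)
      + (∫ t in c..(1:ℝ), qpoly (-1/12) (1/2) (-1) (5/6) (-1/4) t * iteratedDerivWithin 4 f (Set.Icc (-1:ℝ) 1) t)
      = 6 * ((1 / 2) * (f (-c) + f c) +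
        (1 / 2) * ((1 / 3) * f (-1) + (4 / 3) * f 0 + (1 / 3) * f 1) -
        ∫ t in (-1:ℝ)..1, f t) := by
    rw [eD, eC, eB, eA, hint]
    simp only [qpoly]
    linear_combination (-c * iteratedDerivWithin 3 f (Set.Icc (-1:ℝ) 1) (-c)
      - (3/2) * iteratedDerivWithin 2 f (Set.Icc (-1:ℝ) 1) (-c)
      + c * iteratedDerivWithin 3 f (Set.Icc (-1:ℝ) 1) c
      - (3/2) * iteratedDerivWithin 2 f (Set.Icc (-1:ℝ) 1) c) * hc2
  linarith [key, nnD, nnC, nnB, nnA]
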